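/- Let E be a horizontal self-affine carpet with the associated symbolic notation. Then for every 𝚒 ∈ Σ and 0 < t < 1: (1) n_*(t) ≤ n(𝚒,t) ≤ n^*(t); (2) α̲·t ≤ α₂(𝚒|_t) ≤ δ^{−1}·t. -/

import Mathlib

open Set Metric Filter Topology

noncomputable section

/-- The Euclidean plane ℝ². -/
abbrev E2 := EuclideanSpace ℝ (Fin 2)

/-- The vertical line {a} × ℝ in ℝ². -/
def vline (a : ℝ) : Set E2 := {x | x 0 = a}

/-- A horizontal self-affine carpet: an IFS of invertible diagonal affine maps on ℝ²
satisfying (H1), together with its attractor `E` of diameter 1, satisfying the strong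
separation condition and the vertical line condition (H2). -/
structure HorizontalCarpet where
  N : ℕ
  hN : 2 ≤ N
  a1 : Fin N → ℝ
  a2 : Fin N → ℝ
  b1 : Fin N → ℝ
  b2 : Fin N → ℝ
  φ : Fin N → E2 → E2
  hφ : ∀ i x, φ i x = ![a1 i * x 0 + b1 i, a2 i * x 1 + b2 i]
  hH1 : ∀ i, 0 < a2 i ∧ a2 i < a1 i ∧ a1 i < 1
  E : Set E2
  hne : E.Nonempty
  hcomp : IsCompact E
  hinv : E = ⋃ i, φ i '' E
  hdiam : Metric.diam E = 1
  hssc : ∀ i j, i ≠ j → Disjoint (φ i '' E) (φ j '' E)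
  hH2 : ∀ a : ℝ, (vline a ∩ convexHull ℝ E).Nonempty →
    ∃ i j : Fin N, i ≠ j ∧ (vline a ∩ φ i '' (convexHull ℝ E)).Nonempty ∧
      (vline a ∩ φ j '' (convexHull ℝ E)).Nonempty

/-- `η : [0,∞) → [0,∞)` is a homeomorphism (expressed for a function `η : ℝ → ℝ`). -/
def IsHomeoOfIci (η : ℝ → ℝ) : Prop :=
  ∃ e : (Set.Ici (0:ℝ)) ≃ₜ (Set.Ici (0:ℝ)), ∀ x : Set.Ici (0:ℝ), (e x : ℝ) = η x

/-- `f` is η-quasisymmetric. -/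
def IsQuasisymmetric {X Y : Type*} [MetricSpace X] [MetricSpace Y] (η : ℝ → ℝ)
    (f : X → Y) : Prop :=
  ∀ x y z : X, x ≠ z →
    dist (f x) (f y) / dist (f x) (f z) ≤ η (dist x y / dist x z)

/-- The composition `φ_{i₁} ∘ ⋯ ∘ φ_{iₙ}` associated to a finite word. -/
def wordMap (c : HorizontalCarpet) : List (Fin c.N) → E2 → E2
  | [] => id
  | i :: l => c.φ i ∘ wordMap c l

/-- The first `n` entries `𝚒|_n` of an infinite word `𝚒 ∈ Σ`, as a list. -/
def wordPre (c : HorizontalCarpet) (i : ℕ → Fin c.N) (n : ℕ) : List (Fin c.N) :=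
  (List.range n).map i

/-- `α₂(𝚒)`, the product of the vertical contraction ratios along a word. -/
def prodA2 (c : HorizontalCarpet) (l : List (Fin c.N)) : ℝ := (l.map c.a2).prod

/-- `ᾱ = max_i α₁(i)`. -/
def alphaBar (c : HorizontalCarpet) : ℝ := sSup (Set.range c.a1)

/-- `α̲ = min_i α₂(i)`. -/
def alphaLow (c : HorizontalCarpet) : ℝ := sInf (Set.range c.a2)

/-- `δ = min_{i ≠ j} dist(φ_i(E), φ_j(E))`. -/
def sscGap (c : HorizontalCarpet) : ℝ :=
  sInf {d : ℝ | ∃ i j : Fin c.N, i ≠ j ∧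
    ∃ x ∈ c.φ i '' c.E, ∃ y ∈ c.φ j '' c.E, d = dist x y}

/-- `n(𝚒,t)`: the largest `n` such that `B(π(𝚒),t)` meets no level-`n` cylinder other
than `E_{𝚒|_n}`; here `p = π(𝚒)`. -/
def nSep (c : HorizontalCarpet) (i : ℕ → Fin c.N) (p : E2) (t : ℝ) : ℕ :=
  sSup {n : ℕ | ∀ l : List (Fin c.N), l.length = n → l ≠ wordPre c i n →
    wordMap c l '' c.E ∩ closedBall p t = ∅}

/-- `n^*(t) = min{n : ᾱ^n < t}`. -/
def nUp (c : HorizontalCarpet) (t : ℝ) : ℕ := sInf {n : ℕ | alphaBar c ^ n < t}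

/-- `n_*(t) = max{n : α̲^n δ > t}`. -/
def nLow (c : HorizontalCarpet) (t : ℝ) : ℕ :=
  sSup {n : ℕ | t < alphaLow c ^ n * sscGap c}

/-! ### Auxiliary lemmas -/

section Aux

variable (c : HorizontalCarpet)

/-- Product of horizontal contraction ratios along a word. -/
def prodA1 (l : List (Fin c.N)) : ℝ := (l.map c.a1).prod

/-- Convex hull of the attractor. -/
def Xc : Set E2 := convexHull ℝ c.E

lemma dist_coord (u v : E2) :
    dist u v = Real.sqrt ((u 0 - v 0) ^ 2 + (u 1 - v 1) ^ 2) := by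
  rw [EuclideanSpace.dist_eq, Fin.sum_univ_two]
  simp [Real.dist_eq, sq_abs]

lemma abs_sub_le_dist0 (u v : E2) : |u 0 - v 0| ≤ dist u v := by
  rw [dist_coord]
  calc |u 0 - v 0| = Real.sqrt ((u 0 - v 0) ^ 2) := (Real.sqrt_sq_eq_abs _).symm
    _ ≤ _ := Real.sqrt_le_sqrt (by nlinarith [sq_nonneg (u 1 - v 1)])

lemma abs_sub_le_dist1 (u v : E2) : |u 1 - v 1| ≤ dist u v := by
  rw [dist_coord]
  calc |u 1 - v 1| = Real.sqrt ((u 1 - v 1) ^ 2) := (Real.sqrt_sq_eq_abs _).symm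
    _ ≤ _ := Real.sqrt_le_sqrt (by nlinarith [sq_nonneg (u 0 - v 0)])

variable {c}

lemma a2_pos (i : Fin c.N) : 0 < c.a2 i := (c.hH1 i).1
lemma a2_lt_a1 (i : Fin c.N) : c.a2 i < c.a1 i := (c.hH1 i).2.1
lemma a1_lt_one (i : Fin c.N) : c.a1 i < 1 := (c.hH1 i).2.2
lemma a1_pos (i : Fin c.N) : 0 < c.a1 i := (a2_pos i).trans (a2_lt_a1 i)
lemma a2_lt_one (i : Fin c.N) : c.a2 i < 1 := (a2_lt_a1 i).trans (a1_lt_one i)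

lemma finNe : Nonempty (Fin c.N) := ⟨⟨0, by have := c.hN; omega⟩⟩

lemma finNontrivial : Nontrivial (Fin c.N) := Fin.nontrivial_iff_two_le.mpr c.hN

lemma alphaBar_mem : alphaBar c ∈ Set.range c.a1 := by
  have : Nonempty (Fin c.N) := finNe
  exact (Set.range_nonempty _).csSup_mem (Set.finite_range _)

lemma alphaBar_pos : 0 < alphaBar c := by
  obtain ⟨i, hi⟩ := alphaBar_mem (c := c); rw [← hi]; exact a1_pos i

lemma alphaBar_lt_one : alphaBar c < 1 := by
  obtain ⟨i, hi⟩ := alphaBar_mem (c := c); rw [← hi]; exact a1_lt_one i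

lemma le_alphaBar (i : Fin c.N) : c.a1 i ≤ alphaBar c :=
  le_csSup (Set.finite_range _).bddAbove ⟨i, rfl⟩

lemma alphaLow_mem : alphaLow c ∈ Set.range c.a2 := by
  have : Nonempty (Fin c.N) := finNe
  exact (Set.range_nonempty _).csInf_mem (Set.finite_range _)

lemma alphaLow_pos : 0 < alphaLow c := by
  obtain ⟨i, hi⟩ := alphaLow_mem (c := c); rw [← hi]; exact a2_pos i

lemma alphaLow_lt_one : alphaLow c < 1 := by
  obtain ⟨i, hi⟩ := alphaLow_mem (c := c); rw [← hi]; exact a2_lt_one i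

lemma alphaLow_le (i : Fin c.N) : alphaLow c ≤ c.a2 i :=
  csInf_le (Set.finite_range _).bddBelow ⟨i, rfl⟩

lemma phi0 (i : Fin c.N) (x : E2) : c.φ i x 0 = c.a1 i * x 0 + c.b1 i := by
  rw [c.hφ]; rfl

lemma phi1 (i : Fin c.N) (x : E2) : c.φ i x 1 = c.a2 i * x 1 + c.b2 i := by
  rw [c.hφ]; rfl

lemma wordMap_nil (x : E2) : wordMap c [] x = x := rfl

lemma wordMap_cons (i : Fin c.N) (l : List (Fin c.N)) (x : E2) :
    wordMap c (i :: l) x = c.φ i (wordMap c l x) := rfl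

lemma wordMap_append (l m : List (Fin c.N)) (x : E2) :
    wordMap c (l ++ m) x = wordMap c l (wordMap c m x) := by
  induction l with
  | nil => rfl
  | cons a l ih => simp only [List.cons_append, wordMap_cons, ih]

lemma prodA1_nil : prodA1 c [] = 1 := rfl
lemma prodA2_nil : prodA2 c [] = 1 := rfl

lemma prodA1_cons (i : Fin c.N) (l : List (Fin c.N)) :
    prodA1 c (i :: l) = c.a1 i * prodA1 c l := by
  simp [prodA1]

lemma prodA2_cons (i : Fin c.N) (l : List (Fin c.N)) :
    prodA2 c (i :: l) = c.a2 i * prodA2 c l := by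
  simp [prodA2]

lemma prodA1_append (l m : List (Fin c.N)) :
    prodA1 c (l ++ m) = prodA1 c l * prodA1 c m := by
  simp [prodA1]

lemma prodA2_append (l m : List (Fin c.N)) :
    prodA2 c (l ++ m) = prodA2 c l * prodA2 c m := by
  simp [prodA2]

lemma prodA1_pos (l : List (Fin c.N)) : 0 < prodA1 c l := by
  induction l with
  | nil => norm_num [prodA1_nil]
  | cons a l ih => rw [prodA1_cons]; exact mul_pos (a1_pos a) ih

lemma prodA2_pos (l : List (Fin c.N)) : 0 < prodA2 c l := by
  induction l with
  | nil => norm_num [prodA2_nil]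
  | cons a l ih => rw [prodA2_cons]; exact mul_pos (a2_pos a) ih

lemma prodA2_le_prodA1 (l : List (Fin c.N)) : prodA2 c l ≤ prodA1 c l := by
  induction l with
  | nil => rw [prodA1_nil, prodA2_nil]
  | cons a l ih =>
    rw [prodA1_cons, prodA2_cons]
    exact mul_le_mul (a2_lt_a1 a).le ih (prodA2_pos l).le (a1_pos a).le

lemma prodA1_le_pow (l : List (Fin c.N)) : prodA1 c l ≤ alphaBar c ^ l.length := by
  induction l with
  | nil => rw [prodA1_nil]; simp
  | cons a l ih =>
    rw [prodA1_cons, List.length_cons, pow_succ, mul_comm (alphaBar c ^ l.length)]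
    exact mul_le_mul (le_alphaBar a) ih (prodA1_pos l).le alphaBar_pos.le

lemma pow_le_prodA2 (l : List (Fin c.N)) : alphaLow c ^ l.length ≤ prodA2 c l := by
  induction l with
  | nil => rw [prodA2_nil]; simp
  | cons a l ih =>
    rw [prodA2_cons, List.length_cons, pow_succ, mul_comm (alphaLow c ^ l.length)]
    exact mul_le_mul (alphaLow_le a) ih (pow_nonneg alphaLow_pos.le _) (a2_pos a).le

lemma prodA2_le_one (l : List (Fin c.N)) : prodA2 c l ≤ 1 := by
  induction l with
  | nil => rw [prodA2_nil]
  | cons a l ih =>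
    rw [prodA2_cons]
    calc c.a2 a * prodA2 c l ≤ 1 * 1 :=
      mul_le_mul (a2_lt_one a).le ih (prodA2_pos l).le zero_le_one
    _ = 1 := one_mul 1

lemma wordMap_form (l : List (Fin c.N)) : ∃ B D : ℝ, ∀ x : E2,
    wordMap c l x 0 = prodA1 c l * x 0 + B ∧ wordMap c l x 1 = prodA2 c l * x 1 + D := by
  induction l with
  | nil => exact ⟨0, 0, fun x => by simp [wordMap_nil, prodA1_nil, prodA2_nil]⟩
  | cons a l ih =>
    obtain ⟨B, D, h⟩ := ih
    refine ⟨c.a1 a * B + c.b1 a, c.a2 a * D + c.b2 a, fun x => ⟨?_, ?_⟩⟩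
    · rw [wordMap_cons, phi0, (h x).1, prodA1_cons]; ring
    · rw [wordMap_cons, phi1, (h x).2, prodA2_cons]; ring

lemma dist_wordMap_le (l : List (Fin c.N)) (x y : E2) :
    dist (wordMap c l x) (wordMap c l y) ≤ prodA1 c l * dist x y := by
  obtain ⟨B, D, h⟩ := wordMap_form (c := c) l
  rw [dist_coord, dist_coord, (h x).1, (h x).2, (h y).1, (h y).2]
  have h1 : prodA1 c l * x 0 + B - (prodA1 c l * y 0 + B) = prodA1 c l * (x 0 - y 0) := by ring
  have h2 : prodA2 c l * x 1 + D - (prodA2 c l * y 1 + D) = prodA2 c l * (x 1 - y 1) := by ring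
  rw [h1, h2]
  have key : (prodA1 c l * (x 0 - y 0)) ^ 2 + (prodA2 c l * (x 1 - y 1)) ^ 2 ≤
      (prodA1 c l) ^ 2 * ((x 0 - y 0) ^ 2 + (x 1 - y 1) ^ 2) := by
    have h3 : (prodA2 c l) ^ 2 ≤ (prodA1 c l) ^ 2 :=
      pow_le_pow_left₀ (prodA2_pos (c := c) l).le (prodA2_le_prodA1 (c := c) l) 2
    nlinarith [mul_nonneg (sub_nonneg.2 h3) (sq_nonneg (x 1 - y 1))]
  calc Real.sqrt ((prodA1 c l * (x 0 - y 0)) ^ 2 + (prodA2 c l * (x 1 - y 1)) ^ 2)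
      ≤ Real.sqrt ((prodA1 c l) ^ 2 * ((x 0 - y 0) ^ 2 + (x 1 - y 1) ^ 2)) :=
        Real.sqrt_le_sqrt key
    _ = prodA1 c l * Real.sqrt ((x 0 - y 0) ^ 2 + (x 1 - y 1) ^ 2) := by
        rw [Real.sqrt_mul (sq_nonneg _), Real.sqrt_sq (prodA1_pos (c := c) l).le]

lemma dist_wordMap_ge (l : List (Fin c.N)) (x y : E2) :
    prodA2 c l * dist x y ≤ dist (wordMap c l x) (wordMap c l y) := by
  obtain ⟨B, D, h⟩ := wordMap_form (c := c) l
  rw [dist_coord, dist_coord, (h x).1, (h x).2, (h y).1, (h y).2]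
  have h1 : prodA1 c l * x 0 + B - (prodA1 c l * y 0 + B) = prodA1 c l * (x 0 - y 0) := by ring
  have h2 : prodA2 c l * x 1 + D - (prodA2 c l * y 1 + D) = prodA2 c l * (x 1 - y 1) := by ring
  rw [h1, h2]
  have key : (prodA2 c l) ^ 2 * ((x 0 - y 0) ^ 2 + (x 1 - y 1) ^ 2) ≤
      (prodA1 c l * (x 0 - y 0)) ^ 2 + (prodA2 c l * (x 1 - y 1)) ^ 2 := by
    have h3 : (prodA2 c l) ^ 2 ≤ (prodA1 c l) ^ 2 :=
      pow_le_pow_left₀ (prodA2_pos (c := c) l).le (prodA2_le_prodA1 (c := c) l) 2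
    nlinarith [mul_nonneg (sub_nonneg.2 h3) (sq_nonneg (x 0 - y 0))]
  calc prodA2 c l * Real.sqrt ((x 0 - y 0) ^ 2 + (x 1 - y 1) ^ 2)
      = Real.sqrt ((prodA2 c l) ^ 2 * ((x 0 - y 0) ^ 2 + (x 1 - y 1) ^ 2)) := by
        rw [Real.sqrt_mul (sq_nonneg _), Real.sqrt_sq (prodA2_pos (c := c) l).le]
    _ ≤ _ := Real.sqrt_le_sqrt key

lemma dist_wordMap_vert (l : List (Fin c.N)) (x y : E2)
    (h0 : wordMap c l x 0 = wordMap c l y 0) :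
    dist (wordMap c l x) (wordMap c l y) ≤ prodA2 c l * dist x y := by
  obtain ⟨B, D, h⟩ := wordMap_form (c := c) l
  have hx0 : x 0 = y 0 := by
    have := h0
    rw [(h x).1, (h y).1] at this
    have := add_right_cancel this
    exact mul_left_cancel₀ (prodA1_pos (c := c) l).ne' this
  rw [dist_coord, (h x).1, (h x).2, (h y).1, (h y).2, hx0]
  have h2 : prodA2 c l * x 1 + D - (prodA2 c l * y 1 + D) = prodA2 c l * (x 1 - y 1) := by ring
  have h1 : prodA1 c l * y 0 + B - (prodA1 c l * y 0 + B) = 0 := by ring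
  rw [h1, h2]
  have : Real.sqrt (0 ^ 2 + (prodA2 c l * (x 1 - y 1)) ^ 2) = |prodA2 c l * (x 1 - y 1)| := by
    rw [show (0:ℝ) ^ 2 + (prodA2 c l * (x 1 - y 1)) ^ 2 = (prodA2 c l * (x 1 - y 1)) ^ 2 by ring,
      Real.sqrt_sq_eq_abs]
  rw [this, abs_mul, abs_of_pos (prodA2_pos (c := c) l)]
  exact mul_le_mul_of_nonneg_left (abs_sub_le_dist1 x y) (prodA2_pos (c := c) l).le

lemma phi_image_subset (i : Fin c.N) : c.φ i '' c.E ⊆ c.E := by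
  conv_rhs => rw [c.hinv]
  exact Set.subset_iUnion (fun j => c.φ j '' c.E) i

lemma wordMap_image_E_subset (l : List (Fin c.N)) : wordMap c l '' c.E ⊆ c.E := by
  induction l with
  | nil => simp [wordMap_nil]; exact fun x hx => hx
  | cons a l ih =>
    intro z hz
    obtain ⟨x, hx, rfl⟩ := hz
    rw [wordMap_cons]
    exact phi_image_subset a ⟨wordMap c l x, ih ⟨x, hx, rfl⟩, rfl⟩

lemma wordMap_image_E_mono (l m : List (Fin c.N)) :
    wordMap c (l ++ m) '' c.E ⊆ wordMap c l '' c.E := by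
  intro z hz
  obtain ⟨x, hx, rfl⟩ := hz
  rw [wordMap_append]
  exact ⟨wordMap c m x, wordMap_image_E_subset m ⟨x, hx, rfl⟩, rfl⟩

lemma E_subset_X : c.E ⊆ Xc c := subset_convexHull ℝ _

lemma diam_X : Metric.diam (Xc c) = 1 := by
  rw [Xc, convexHull_diam, c.hdiam]

lemma bounded_X : Bornology.IsBounded (Xc c) :=
  isBounded_convexHull.2 c.hcomp.isBounded

lemma dist_le_one_of_X {x y : E2} (hx : x ∈ Xc c) (hy : y ∈ Xc c) : dist x y ≤ 1 :=
  (diam_X (c := c)) ▸ Metric.dist_le_diam_of_mem (bounded_X (c := c)) hx hy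

lemma dist_le_one_of_E {x y : E2} (hx : x ∈ c.E) (hy : y ∈ c.E) : dist x y ≤ 1 :=
  dist_le_one_of_X (E_subset_X hx) (E_subset_X hy)

lemma wordMap_combo (l : List (Fin c.N)) (a b : ℝ) (hab : a + b = 1) (x y : E2) :
    wordMap c l (a • x + b • y) = a • wordMap c l x + b • wordMap c l y := by
  obtain ⟨B, D, h⟩ := wordMap_form (c := c) l
  have hb : b = 1 - a := by linarith
  subst hb
  ext j
  have hco0 : ∀ u v : E2, (a • u + (1 - a) • v) 0 = a * u 0 + (1 - a) * v 0 := fun u v => rfl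
  have hco1 : ∀ u v : E2, (a • u + (1 - a) • v) 1 = a * u 1 + (1 - a) * v 1 := fun u v => rfl
  fin_cases j
  · show wordMap c l (a • x + (1 - a) • y) 0 = (a • wordMap c l x + (1 - a) • wordMap c l y) 0
    rw [(h _).1, hco0, hco0, (h x).1, (h y).1]; ring
  · show wordMap c l (a • x + (1 - a) • y) 1 = (a • wordMap c l x + (1 - a) • wordMap c l y) 1
    rw [(h _).2, hco1, hco1, (h x).2, (h y).2]; ring

lemma wordMap_image_X_subset (l : List (Fin c.N)) : wordMap c l '' Xc c ⊆ Xc c := by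
  rw [Set.image_subset_iff]
  refine convexHull_min ?_ ?_
  · intro e he
    exact Set.mem_preimage.2 (E_subset_X (wordMap_image_E_subset l ⟨e, he, rfl⟩))
  · intro x hx y hy a b ha hb hab
    rw [Set.mem_preimage, wordMap_combo l a b hab]
    exact (convex_convexHull ℝ c.E) hx hy ha hb hab

lemma wordMap_image_X_mono (l m : List (Fin c.N)) :
    wordMap c (l ++ m) '' Xc c ⊆ wordMap c l '' Xc c := by
  intro z hz
  obtain ⟨x, hx, rfl⟩ := hz
  rw [wordMap_append]
  exact ⟨wordMap c m x, wordMap_image_X_subset m ⟨x, hx, rfl⟩, rfl⟩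

/-! ### The separation gap -/

lemma gap_bddBelow : BddBelow {d : ℝ | ∃ i j : Fin c.N, i ≠ j ∧
    ∃ x ∈ c.φ i '' c.E, ∃ y ∈ c.φ j '' c.E, d = dist x y} := by
  refine ⟨0, fun d hd => ?_⟩
  obtain ⟨i, j, hij, x, hx, y, hy, rfl⟩ := hd
  exact dist_nonneg

lemma gap_nonempty : {d : ℝ | ∃ i j : Fin c.N, i ≠ j ∧
    ∃ x ∈ c.φ i '' c.E, ∃ y ∈ c.φ j '' c.E, d = dist x y}.Nonempty := by
  have h2 := c.hN
  obtain ⟨e, he⟩ := c.hne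
  refine ⟨dist (c.φ ⟨0, by omega⟩ e) (c.φ ⟨1, by omega⟩ e),
    ⟨0, by omega⟩, ⟨1, by omega⟩, ?_, _, ⟨e, he, rfl⟩, _, ⟨e, he, rfl⟩, rfl⟩
  intro h
  simpa using congrArg Fin.val h

lemma gap_le {i j : Fin c.N} (hij : i ≠ j) {x y : E2}
    (hx : x ∈ c.φ i '' c.E) (hy : y ∈ c.φ j '' c.E) : sscGap c ≤ dist x y :=
  csInf_le gap_bddBelow ⟨i, j, hij, x, hx, y, hy, rfl⟩

lemma phi_continuous (i : Fin c.N) : Continuous (c.φ i) := by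
  have hl : ∀ x y : E2, dist (c.φ i x) (c.φ i y) ≤ (c.a1 i).toNNReal * dist x y := by
    intro x y
    have := dist_wordMap_le (c := c) [i] x y
    simp only [wordMap_cons, wordMap_nil, prodA1_cons, prodA1_nil, mul_one] at this
    rwa [Real.coe_toNNReal _ (a1_pos i).le]
  exact (LipschitzWith.of_dist_le_mul hl).continuous

lemma gap_pos : 0 < sscGap c := by
  have h2 := c.hN
  have hKc : ∀ i : Fin c.N, IsCompact (c.φ i '' c.E) := fun i => c.hcomp.image (phi_continuous i)
  have hTc : IsCompact (⋃ p ∈ {p : Fin c.N × Fin c.N | p.1 ≠ p.2},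
      (c.φ p.1 '' c.E) ×ˢ (c.φ p.2 '' c.E)) :=
    Set.Finite.isCompact_biUnion (Set.toFinite _) (fun p _ => (hKc p.1).prod (hKc p.2))
  have himg : {d : ℝ | ∃ i j : Fin c.N, i ≠ j ∧
      ∃ x ∈ c.φ i '' c.E, ∃ y ∈ c.φ j '' c.E, d = dist x y} =
      (fun q : E2 × E2 => dist q.1 q.2) '' (⋃ p ∈ {p : Fin c.N × Fin c.N | p.1 ≠ p.2},
        (c.φ p.1 '' c.E) ×ˢ (c.φ p.2 '' c.E)) := by
    ext d
    constructor
    · rintro ⟨i, j, hij, x, hx, y, hy, rfl⟩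
      exact ⟨(x, y), Set.mem_biUnion
        (show ((i, j) : Fin c.N × Fin c.N) ∈ {p : Fin c.N × Fin c.N | p.1 ≠ p.2} from hij)
        (Set.mk_mem_prod hx hy), rfl⟩
    · rintro ⟨⟨x, y⟩, hmem, rfl⟩
      rcases Set.mem_iUnion₂.1 hmem with ⟨p, hp, hxy⟩
      exact ⟨p.1, p.2, hp, x, (Set.mem_prod.1 hxy).1, y, (Set.mem_prod.1 hxy).2, rfl⟩
  have hij01 : (⟨0, by omega⟩ : Fin c.N) ≠ ⟨1, by omega⟩ := by
    intro h; simpa using congrArg Fin.val h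
  obtain ⟨e, he⟩ := c.hne
  have hne2 : ((fun q : E2 × E2 => dist q.1 q.2) '' (⋃ p ∈ {p : Fin c.N × Fin c.N | p.1 ≠ p.2},
      (c.φ p.1 '' c.E) ×ˢ (c.φ p.2 '' c.E))).Nonempty := by
    refine ⟨_, ⟨(c.φ ⟨0, by omega⟩ e, c.φ ⟨1, by omega⟩ e), Set.mem_biUnion
      (show ((⟨0, by omega⟩, ⟨1, by omega⟩) : Fin c.N × Fin c.N) ∈
        {p : Fin c.N × Fin c.N | p.1 ≠ p.2} from hij01)
      (Set.mk_mem_prod ⟨e, he, rfl⟩ ⟨e, he, rfl⟩), rfl⟩⟩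
  have hmem := (hTc.image continuous_dist).sInf_mem hne2
  rw [sscGap, himg]
  obtain ⟨⟨x, y⟩, hmemT, heq⟩ := hmem
  rcases Set.mem_iUnion₂.1 hmemT with ⟨p, hp, hxy⟩
  rw [← heq]
  refine dist_pos.2 fun h => ?_
  exact Set.disjoint_left.mp (c.hssc p.1 p.2 hp) (Set.mem_prod.1 hxy).1
    (h ▸ (Set.mem_prod.1 hxy).2)

/-! ### Words -/

lemma wordPre_length (i : ℕ → Fin c.N) (n : ℕ) : (wordPre c i n).length = n := by
  simp [wordPre]

lemma wordPre_succ (i : ℕ → Fin c.N) (n : ℕ) :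
    wordPre c i (n + 1) = wordPre c i n ++ [i n] := by
  simp [wordPre, List.range_succ]

lemma wordPre_prefix_eq {i : ℕ → Fin c.N} {n : ℕ} {l : List (Fin c.N)}
    (h : l <+: wordPre c i n) : l = wordPre c i l.length := by
  have hlen : l.length ≤ n := by
    have := h.length_le
    rwa [wordPre_length] at this
  obtain ⟨s, hs⟩ := h
  have ht : l = (wordPre c i n).take l.length := by rw [← hs, List.take_left]
  conv_lhs => rw [ht]
  rw [wordPre, ← List.map_take, List.take_range, Nat.min_eq_left hlen, wordPre]

lemma prodA2_wordPre_antitone (i : ℕ → Fin c.N) {j n : ℕ} (h : j ≤ n) :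
    prodA2 c (wordPre c i n) ≤ prodA2 c (wordPre c i j) := by
  induction n with
  | zero => simp_all
  | succ n ih =>
    rcases Nat.lt_or_ge j (n + 1) with hlt | hge
    · have hj : j ≤ n := by omega
      refine le_trans ?_ (ih hj)
      rw [wordPre_succ, prodA2_append, prodA2_cons, prodA2_nil, mul_one]
      calc prodA2 c (wordPre c i n) * c.a2 (i n) ≤ prodA2 c (wordPre c i n) * 1 :=
        mul_le_mul_of_nonneg_left (a2_lt_one (i n)).le (prodA2_pos _).le
      _ = _ := mul_one _
    · have : j = n + 1 := by omega
      subst this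
      exact le_refl _

/-! ### Separation between distinct cylinders -/

lemma cylinder_sep : ∀ (l m : List (Fin c.N)), l.length = m.length → l ≠ m →
    ∀ u v : E2, u ∈ wordMap c l '' c.E → v ∈ wordMap c m '' c.E →
    ∃ pre, pre <+: m ∧ pre.length < m.length ∧ prodA2 c pre * sscGap c ≤ dist u v := by
  intro l
  induction l with
  | nil =>
    intro m hlen hne
    exact absurd (List.length_eq_zero_iff.mp hlen.symm).symm hne
  | cons a l' ih =>
    intro m hlen hne u v hu hv
    rcases m with _ | ⟨b, m'⟩
    · simp at hlen
    obtain ⟨xu, hxu, rfl⟩ := hu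
    obtain ⟨xv, hxv, rfl⟩ := hv
    rw [wordMap_cons] at *
    rcases eq_or_ne a b with rfl | hab
    · have hne' : l' ≠ m' := fun h => hne (by rw [h])
      have hlen' : l'.length = m'.length := by simpa using hlen
      obtain ⟨pre, hpre, hprelen, hbound⟩ := ih m' hlen' hne'
        (wordMap c l' xu) (wordMap c m' xv) ⟨xu, hxu, rfl⟩ ⟨xv, hxv, rfl⟩
      refine ⟨a :: pre, List.cons_prefix_cons.mpr ⟨rfl, hpre⟩, by simpa using hprelen, ?_⟩
      rw [prodA2_cons, mul_assoc]
      calc c.a2 a * (prodA2 c pre * sscGap c)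
          ≤ c.a2 a * dist (wordMap c l' xu) (wordMap c m' xv) :=
            mul_le_mul_of_nonneg_left hbound (a2_pos a).le
        _ ≤ _ := by
            have := dist_wordMap_ge (c := c) [a] (wordMap c l' xu) (wordMap c m' xv)
            simpa [wordMap_cons, wordMap_nil, prodA2_cons, prodA2_nil] using this
    · refine ⟨[], List.nil_prefix, by simp, ?_⟩
      rw [prodA2_nil, one_mul]
      exact gap_le hab ⟨wordMap c l' xu, wordMap_image_E_subset l' ⟨xu, hxu, rfl⟩, rfl⟩
        ⟨wordMap c m' xv, wordMap_image_E_subset m' ⟨xv, hxv, rfl⟩, rfl⟩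

/-! ### Vertical line lemmas -/

lemma vline_step (a : ℝ) (l : List (Fin c.N))
    (h : (vline a ∩ wordMap c l '' Xc c).Nonempty) :
    ∃ k k' : Fin c.N, k ≠ k' ∧ (vline a ∩ wordMap c (l ++ [k]) '' Xc c).Nonempty ∧
      (vline a ∩ wordMap c (l ++ [k']) '' Xc c).Nonempty := by
  obtain ⟨z, hz0, w, hwX, rfl⟩ := h
  obtain ⟨B, D, hf⟩ := wordMap_form (c := c) l
  have hline : (vline (w 0) ∩ convexHull ℝ c.E).Nonempty := ⟨w, rfl, hwX⟩
  obtain ⟨k, k', hkk', ⟨u, hu0, huX⟩, ⟨u', hu'0, hu'X⟩⟩ := c.hH2 (w 0) hline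
  have key : ∀ (kk : Fin c.N) (v : E2), v 0 = w 0 → v ∈ c.φ kk '' convexHull ℝ c.E →
      (vline a ∩ wordMap c (l ++ [kk]) '' Xc c).Nonempty := by
    intro kk v hv0 hvX
    obtain ⟨x, hx, rfl⟩ := hvX
    refine ⟨wordMap c l (c.φ kk x), ?_, ?_⟩
    · show wordMap c l (c.φ kk x) 0 = a
      rw [(hf _).1]
      have : (c.φ kk x) 0 = w 0 := hv0
      rw [this, ← (hf w).1]
      exact hz0
    · refine ⟨x, hx, ?_⟩
      rw [wordMap_append]
      rfl
  exact ⟨k, k', hkk', key k u hu0 huX, key k' u' hu'0 hu'X⟩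

lemma vline_iter (m : ℕ) : ∀ (a : ℝ) (l : List (Fin c.N)),
    (vline a ∩ wordMap c l '' Xc c).Nonempty →
    ∃ s : List (Fin c.N), s.length = m ∧ (vline a ∩ wordMap c (l ++ s) '' Xc c).Nonempty := by
  induction m with
  | zero => intro a l h; exact ⟨[], rfl, by simpa using h⟩
  | succ m ih =>
    intro a l h
    obtain ⟨k, _, _, h1, _⟩ := vline_step a l h
    obtain ⟨s', hs'len, hs'⟩ := ih a (l ++ [k]) h1
    refine ⟨[k] ++ s', by simp [hs'len], ?_⟩
    rwa [← List.append_assoc]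

end Aux


section Main

variable {c : HorizontalCarpet}

/-- The defining set of `nSep`. -/
def SepSet (c : HorizontalCarpet) (i : ℕ → Fin c.N) (p : E2) (t : ℝ) : Set ℕ :=
  {n : ℕ | ∀ l : List (Fin c.N), l.length = n → l ≠ wordPre c i n →
    wordMap c l '' c.E ∩ closedBall p t = ∅}

lemma nSep_eq (i : ℕ → Fin c.N) (p : E2) (t : ℝ) : nSep c i p t = sSup (SepSet c i p t) := rfl

lemma zero_mem_SSet (i : ℕ → Fin c.N) (p : E2) (t : ℝ) : 0 ∈ SepSet c i p t := by
  intro l hl hlne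
  exact absurd (List.length_eq_zero_iff.mp hl) hlne

lemma claimA {i : ℕ → Fin c.N} {p : E2} {t : ℝ}
    (hp : ∀ n : ℕ, p ∈ wordMap c (wordPre c i n) '' c.E)
    (n : ℕ) (hn : alphaBar c ^ n < t) : (n + 1) ∉ SepSet c i p t := by
  intro hmem
  obtain ⟨x, hxE, hpx⟩ := hp n
  have : Nontrivial (Fin c.N) := finNontrivial
  obtain ⟨k, hk⟩ := exists_ne (i n)
  obtain ⟨y0, hy0⟩ := c.hne
  have hlen : (wordPre c i n ++ [k]).length = n + 1 := by simp [wordPre_length]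
  have hlne : wordPre c i n ++ [k] ≠ wordPre c i (n + 1) := by
    rw [wordPre_succ]
    intro h
    have := List.append_cancel_left h
    simp only [List.cons.injEq, and_true] at this
    exact hk this
  have hz : wordMap c (wordPre c i n ++ [k]) y0 ∈ wordMap c (wordPre c i n ++ [k]) '' c.E :=
    ⟨y0, hy0, rfl⟩
  have hdist : dist (wordMap c (wordPre c i n ++ [k]) y0) p ≤ t := by
    rw [← hpx, wordMap_append]
    calc dist (wordMap c (wordPre c i n) (wordMap c [k] y0)) (wordMap c (wordPre c i n) x)
        ≤ prodA1 c (wordPre c i n) * dist (wordMap c [k] y0) x := dist_wordMap_le _ _ _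
      _ ≤ alphaBar c ^ n * 1 := by
          refine mul_le_mul ?_ ?_ dist_nonneg (pow_nonneg alphaBar_pos.le _)
          · have := prodA1_le_pow (c := c) (wordPre c i n)
            rwa [wordPre_length] at this
          · exact dist_le_one_of_E
              (wordMap_image_E_subset [k] ⟨y0, hy0, rfl⟩) hxE
      _ = alphaBar c ^ n := mul_one _
      _ ≤ t := hn.le
  have h := hmem _ hlen hlne
  rw [Set.eq_empty_iff_forall_notMem] at h
  exact h _ ⟨hz, Metric.mem_closedBall.2 hdist⟩

lemma SSet_le_nUp {i : ℕ → Fin c.N} {p : E2} {t : ℝ}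
    (hp : ∀ n : ℕ, p ∈ wordMap c (wordPre c i n) '' c.E)
    (ht0 : 0 < t) {n : ℕ} (hn : n ∈ SepSet c i p t) : n ≤ nUp c t := by
  have hUne : {m : ℕ | alphaBar c ^ m < t}.Nonempty :=
    exists_pow_lt_of_lt_one ht0 alphaBar_lt_one
  have hU : alphaBar c ^ (nUp c t) < t := Nat.sInf_mem hUne
  by_contra hcon
  push_neg at hcon
  have h1 : alphaBar c ^ (n - 1) < t :=
    lt_of_le_of_lt
      (pow_le_pow_of_le_one alphaBar_pos.le alphaBar_lt_one.le (by omega)) hU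
  have h2 := claimA hp (n - 1) h1
  rw [show n - 1 + 1 = n by omega] at h2
  exact h2 hn

lemma claimC {i : ℕ → Fin c.N} {p : E2} {t : ℝ}
    (hp : ∀ n : ℕ, p ∈ wordMap c (wordPre c i n) '' c.E)
    (nn : ℕ) (hmem : (nn + 1) ∈ SepSet c i p t) : t ≤ prodA2 c (wordPre c i nn) := by
  obtain ⟨x, hxE, hpx⟩ := hp nn
  have hpX : p ∈ wordMap c (wordPre c i nn) '' Xc c := ⟨x, E_subset_X hxE, hpx⟩
  have hline : (vline (p 0) ∩ wordMap c (wordPre c i nn) '' Xc c).Nonempty := ⟨p, rfl, hpX⟩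
  obtain ⟨k, k', hkk', h1, h2⟩ := vline_step (p 0) (wordPre c i nn) hline
  obtain ⟨kk, hkkne, hkint⟩ : ∃ kk, kk ≠ i nn ∧
      (vline (p 0) ∩ wordMap c (wordPre c i nn ++ [kk]) '' Xc c).Nonempty := by
    by_cases h : k = i nn
    · exact ⟨k', fun e => hkk' (h.trans e.symm), h2⟩
    · exact ⟨k, h, h1⟩
  by_contra hcon
  push_neg at hcon
  obtain ⟨m, hm⟩ := exists_pow_lt_of_lt_one (sub_pos.2 hcon) (alphaBar_lt_one (c := c))
  obtain ⟨s, hslen, q, hq0, hqmem⟩ := vline_iter m (p 0) (wordPre c i nn ++ [kk]) hkint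
  obtain ⟨y0, hy0⟩ := c.hne
  obtain ⟨w, hwX, hqw⟩ := hqmem
  have heE : wordMap c ((wordPre c i nn ++ [kk]) ++ s) y0 ∈
      wordMap c (wordPre c i nn ++ [kk]) '' c.E :=
    wordMap_image_E_mono _ s ⟨y0, hy0, rfl⟩
  have hq_in_pre : q ∈ wordMap c (wordPre c i nn) '' Xc c := by
    refine wordMap_image_X_mono (wordPre c i nn) ([kk] ++ s) ⟨w, hwX, ?_⟩
    rw [← List.append_assoc]
    exact hqw
  obtain ⟨w2, hw2X, hqw2⟩ := hq_in_pre
  have hq0' : q 0 = p 0 := hq0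
  have hdpq : dist p q ≤ prodA2 c (wordPre c i nn) := by
    rw [← hpx, ← hqw2]
    calc dist (wordMap c (wordPre c i nn) x) (wordMap c (wordPre c i nn) w2)
        ≤ prodA2 c (wordPre c i nn) * dist x w2 := by
          refine dist_wordMap_vert _ _ _ ?_
          rw [hpx, hqw2, hq0']
      _ ≤ prodA2 c (wordPre c i nn) * 1 :=
          mul_le_mul_of_nonneg_left (dist_le_one_of_X (E_subset_X hxE) hw2X)
            (prodA2_pos _).le
      _ = prodA2 c (wordPre c i nn) := mul_one _
  have hdqe : dist q (wordMap c ((wordPre c i nn ++ [kk]) ++ s) y0) ≤ alphaBar c ^ m := by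
    rw [← hqw]
    calc dist (wordMap c ((wordPre c i nn ++ [kk]) ++ s) w)
          (wordMap c ((wordPre c i nn ++ [kk]) ++ s) y0)
        ≤ prodA1 c ((wordPre c i nn ++ [kk]) ++ s) * dist w y0 := dist_wordMap_le _ _ _
      _ ≤ alphaBar c ^ ((wordPre c i nn ++ [kk]) ++ s).length * 1 :=
          mul_le_mul (prodA1_le_pow _) (dist_le_one_of_X hwX (E_subset_X hy0))
            dist_nonneg (pow_nonneg alphaBar_pos.le _)
      _ = alphaBar c ^ ((wordPre c i nn ++ [kk]) ++ s).length := mul_one _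
      _ ≤ alphaBar c ^ m := by
          refine pow_le_pow_of_le_one alphaBar_pos.le alphaBar_lt_one.le ?_
          simp only [List.length_append, wordPre_length, List.length_singleton, hslen]
          omega
  have hdist : dist (wordMap c ((wordPre c i nn ++ [kk]) ++ s) y0) p ≤ t := by
    have htri := dist_triangle (wordMap c ((wordPre c i nn ++ [kk]) ++ s) y0) q p
    rw [dist_comm q p] at htri
    rw [dist_comm] at hdqe
    linarith
  have hlen : (wordPre c i nn ++ [kk]).length = nn + 1 := by simp [wordPre_length]
  have hlne : wordPre c i nn ++ [kk] ≠ wordPre c i (nn + 1) := by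
    rw [wordPre_succ]
    intro h
    have := List.append_cancel_left h
    simp only [List.cons.injEq, and_true] at this
    exact hkkne this
  have h := hmem _ hlen hlne
  rw [Set.eq_empty_iff_forall_notMem] at h
  exact h _ ⟨heE, Metric.mem_closedBall.2 hdist⟩

end Main

/-- Lemma 5.2 of the paper. -/
theorem statement9 (c : HorizontalCarpet) (i : ℕ → Fin c.N) (p : E2)
    (hp : ∀ n : ℕ, p ∈ wordMap c (wordPre c i n) '' c.E)
    (t : ℝ) (ht0 : 0 < t) (ht1 : t < 1) :
    (nLow c t ≤ nSep c i p t ∧ nSep c i p t ≤ nUp c t) ∧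
    (alphaLow c * t ≤ prodA2 c (wordPre c i (nSep c i p t)) ∧
      prodA2 c (wordPre c i (nSep c i p t)) ≤ (sscGap c)⁻¹ * t) := by
  have hSne : (SepSet c i p t).Nonempty := ⟨0, zero_mem_SSet i p t⟩
  have hSbdd : BddAbove (SepSet c i p t) := ⟨nUp c t, fun n hn => SSet_le_nUp hp ht0 hn⟩
  have hnsep_eq : nSep c i p t = sSup (SepSet c i p t) := rfl
  have hmem : nSep c i p t ∈ SepSet c i p t := by
    rw [hnsep_eq]; exact Nat.sSup_mem hSne hSbdd
  have hupper : nSep c i p t ≤ nUp c t := SSet_le_nUp hp ht0 hmem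
  have hsucc : nSep c i p t + 1 ∉ SepSet c i p t := by
    intro h
    have hle : nSep c i p t + 1 ≤ sSup (SepSet c i p t) := le_csSup hSbdd h
    rw [← hnsep_eq] at hle
    omega
  simp only [SepSet, Set.mem_setOf_eq] at hsucc
  push_neg at hsucc
  obtain ⟨l, hllen, hlne, hint⟩ := hsucc
  obtain ⟨z, hzc, hzball⟩ := hint
  have hdistzp : dist z p ≤ t := Metric.mem_closedBall.1 hzball
  have hplev : p ∈ wordMap c (wordPre c i (nSep c i p t + 1)) '' c.E := hp _
  obtain ⟨pre, hpre, hprelen, hbound⟩ := cylinder_sep l (wordPre c i (nSep c i p t + 1))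
    (by rw [hllen, wordPre_length]) hlne z p hzc hplev
  have hprelen' : pre.length ≤ nSep c i p t := by
    rw [wordPre_length] at hprelen; omega
  have hpre_eq : pre = wordPre c i pre.length := wordPre_prefix_eq hpre
  have hkey : prodA2 c (wordPre c i pre.length) * sscGap c ≤ t := by
    rw [← hpre_eq]; exact hbound.trans hdistzp
  have hlow : nLow c t ≤ nSep c i p t := by
    refine csSup_le' fun m hm => ?_
    by_contra hcon
    push_neg at hcon
    have hA : alphaLow c ^ (nSep c i p t) * sscGap c ≤ t := by
      calc alphaLow c ^ (nSep c i p t) * sscGap c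
          ≤ alphaLow c ^ pre.length * sscGap c :=
            mul_le_mul_of_nonneg_right
              (pow_le_pow_of_le_one alphaLow_pos.le alphaLow_lt_one.le hprelen')
              gap_pos.le
        _ ≤ prodA2 c (wordPre c i pre.length) * sscGap c := by
            refine mul_le_mul_of_nonneg_right ?_ gap_pos.le
            have := pow_le_prodA2 (c := c) (wordPre c i pre.length)
            rwa [wordPre_length] at this
        _ ≤ t := hkey
    have hB : alphaLow c ^ m ≤ alphaLow c ^ (nSep c i p t) :=
      pow_le_pow_of_le_one alphaLow_pos.le alphaLow_lt_one.le hcon.le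
    have hm' : t < alphaLow c ^ m * sscGap c := hm
    nlinarith [gap_pos (c := c)]
  have hright : prodA2 c (wordPre c i (nSep c i p t)) ≤ (sscGap c)⁻¹ * t := by
    rw [inv_mul_eq_div, le_div_iff₀ gap_pos]
    calc prodA2 c (wordPre c i (nSep c i p t)) * sscGap c
        ≤ prodA2 c (wordPre c i pre.length) * sscGap c :=
          mul_le_mul_of_nonneg_right (prodA2_wordPre_antitone i hprelen') gap_pos.le
      _ ≤ t := hkey
  have hleft : alphaLow c * t ≤ prodA2 c (wordPre c i (nSep c i p t)) := by
    rcases Nat.eq_zero_or_pos (nSep c i p t) with h0 | hpos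
    · rw [h0]
      have h1 : prodA2 c (wordPre c i 0) = 1 := by simp [wordPre, prodA2]
      rw [h1]
      nlinarith [alphaLow_pos (c := c), alphaLow_lt_one (c := c)]
    · obtain ⟨nn, hnn⟩ : ∃ nn, nSep c i p t = nn + 1 := ⟨nSep c i p t - 1, by omega⟩
      have hC : t ≤ prodA2 c (wordPre c i nn) := claimC hp nn (hnn ▸ hmem)
      rw [hnn, wordPre_succ, prodA2_append, prodA2_cons, prodA2_nil, mul_one]
      calc alphaLow c * t ≤ c.a2 (i nn) * prodA2 c (wordPre c i nn) :=
            mul_le_mul (alphaLow_le (i nn)) hC ht0.le (a2_pos (i nn)).le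
        _ = prodA2 c (wordPre c i nn) * c.a2 (i nn) := mul_comm _ _
  exact ⟨⟨hlow, hupper⟩, hleft, hright⟩
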